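/- Let T be a turning Eulerian circuit of an X-graph G, and suppose there is a vertex A such that T enters A once along a half-edge of one pair and once along a half-edge of the other pair (i.e., T is not strongly turning at A). Then the two closed walks obtained by splitting T at the two visits of A are edge-disjoint closed walks whose unique crossing vertex is A. -/

import Mathlib

/-- A multigraph: vertices, edges, and for each edge its (ordered) pair of ends. -/
structure Multigraph where
  V : Type
  E : Type
  ends : E → V × V

namespace Multigraph

variable (G : Multigraph)

/-- A half-edge is a pair (edge, chosen end); `hvtx` is the vertex at that end. -/
def hvtx (h : G.E × Bool) : G.V :=
  if h.2 then (G.ends h.1).1 else (G.ends h.1).2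

/-- `G` is 4-regular: every vertex has exactly four incident half-edges. -/
def FourRegular : Prop :=
  ∀ v : G.V, {h : G.E × Bool | G.hvtx h = v}.ncard = 4

def adj (v w : G.V) : Prop :=
  ∃ e : G.E, G.ends e = (v, w) ∨ G.ends e = (w, v)

def Conn : Prop := ∀ v w : G.V, Relation.ReflTransGen G.adj v w

/-- A closed walk of length `n`, given as a cyclic sequence of darts.
The dart `(e, b)` is traversed from `hvtx (e, b)` to `hvtx (e, !b)`. -/
structure ClosedWalk (n : ℕ) where
  dart : ZMod n → G.E × Bool
  compat : ∀ i, G.hvtx (dart (i + 1)) = G.hvtx ((dart i).1, !(dart i).2)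

variable {G}

namespace ClosedWalk

variable {n : ℕ} (w : G.ClosedWalk n)

/-- The vertex visited at step `i` (tail of the `i`-th dart). -/
def vtx (i : ZMod n) : G.V := G.hvtx (w.dart i)

/-- The half-edge along which the walk enters the vertex visited at step `i`. -/
def enter (i : ZMod n) : G.E × Bool := ((w.dart (i - 1)).1, !(w.dart (i - 1)).2)

/-- The half-edge along which the walk leaves the vertex visited at step `i`. -/
def leave (i : ZMod n) : G.E × Bool := w.dart i

def edges : Set G.E := {e | ∃ i, (w.dart i).1 = e}

def Visits (v : G.V) : Prop := ∃ i, w.vtx i = v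

/-- A (closed) trail: no repeated edges. -/
def IsTrail : Prop := Function.Injective fun i => (w.dart i).1

/-- An Eulerian circuit: every edge is traversed exactly once. -/
def IsEulerian : Prop := ∀ e : G.E, ∃! i, (w.dart i).1 = e

/-- A simple (non-self-intersecting) cycle: no repeated vertices. -/
def IsSimple : Prop := Function.Injective w.vtx

end ClosedWalk

def EdgeDisjoint {n m : ℕ} (w₁ : G.ClosedWalk n) (w₂ : G.ClosedWalk m) : Prop :=
  ∀ e, e ∈ w₁.edges → e ∉ w₂.edges

variable (G)

/-- A crossing structure: at each vertex, the four incident half-edges are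
partitioned into two pairs, recorded by a `Bool`-labelling `p` such that each
label class at each vertex has exactly two half-edges. -/
structure XStructure where
  p : G.E × Bool → Bool
  pairs : ∀ (v : G.V) (b : Bool), {h : G.E × Bool | G.hvtx h = v ∧ p h = b}.ncard = 2

variable {G}

/-- `v` is a crossing vertex of two (edge-disjoint) closed walks: one walk has a
passage through `v` using both half-edges of one pair, and the other walk has a
passage through `v` using both half-edges of the other pair. -/
def CrossingVertex (X : XStructure G) {n m : ℕ}
    (w₁ : G.ClosedWalk n) (w₂ : G.ClosedWalk m) (v : G.V) : Prop :=
  ∃ i j, w₁.vtx i = v ∧ w₂.vtx j = v ∧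
    X.p (w₁.enter i) = X.p (w₁.leave i) ∧
    X.p (w₂.enter j) = X.p (w₂.leave j) ∧
    X.p (w₁.leave i) ≠ X.p (w₂.leave j)

/-- A closed walk is turning if at each passage through a vertex it enters and
leaves along half-edges of different pairs. -/
def Turning (X : XStructure G) {n : ℕ} (w : G.ClosedWalk n) : Prop :=
  ∀ i, X.p (w.enter i) ≠ X.p (w.leave i)

/-- Strongly turning: turning, and the entries into any given vertex always use
half-edges of the same pair. -/
def StronglyTurning (X : XStructure G) {n : ℕ} (w : G.ClosedWalk n) : Prop :=
  Turning X w ∧ ∀ i j, w.vtx i = w.vtx j → X.p (w.enter i) = X.p (w.enter j)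

/-- Vertices `P ≠ Q` are interlaced with respect to a closed walk if their
occurrences appear along the walk in cyclic order `P Q P Q`. -/
def Interlaced {n : ℕ} (w : G.ClosedWalk n) (P Q : G.V) : Prop :=
  P ≠ Q ∧ ∃ a b c d : ZMod n, a.val < b.val ∧ b.val < c.val ∧ c.val < d.val ∧
    ((w.vtx a = P ∧ w.vtx b = Q ∧ w.vtx c = P ∧ w.vtx d = Q) ∨
     (w.vtx a = Q ∧ w.vtx b = P ∧ w.vtx c = Q ∧ w.vtx d = P))

/-- A closed walk is convenient if the vertices can be split into two sets with
no two vertices in the same set interlaced. -/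
def Convenient {n : ℕ} (w : G.ClosedWalk n) : Prop :=
  ∃ f : G.V → Bool, ∀ P Q, Interlaced w P Q → f P ≠ f Q

/-- The interlacement graph `Q(T)` of a closed walk `T`. -/
def interlacementGraph {n : ℕ} (w : G.ClosedWalk n) : SimpleGraph G.V :=
  SimpleGraph.fromRel (Interlaced w)

variable (G)

/-- An embedding of a multigraph in the plane: points for vertices, injective
continuous curves for edges, meeting only as prescribed by incidence. -/
structure PlaneEmb where
  vmap : G.V → ℝ × ℝ
  emap : G.E → unitInterval → ℝ × ℝ
  vinj : Function.Injective vmap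
  cont : ∀ e, Continuous (emap e)
  einj : ∀ e, Function.Injective (emap e)
  ends₀ : ∀ e, emap e 0 = vmap (G.ends e).1
  ends₁ : ∀ e, emap e 1 = vmap (G.ends e).2
  interior_vtx : ∀ e t, t ≠ 0 → t ≠ 1 → emap e t ∉ Set.range vmap
  edge_disj : ∀ e e', e ≠ e' → ∀ t t', emap e t = emap e' t' →
    emap e t ∈ Set.range vmap

/-- `G` is planar if it admits a plane embedding. -/
def Planar : Prop := Nonempty (PlaneEmb G)

variable {G}

/-- The curve of a half-edge, reparametrized to start at its vertex. -/
def PlaneEmb.curve (φ : PlaneEmb G) (h : G.E × Bool) (s : unitInterval) : ℝ × ℝ :=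
  φ.emap h.1 (if h.2 then s else unitInterval.symm s)

/-- The point on the circle of radius `r` around `c` at angle `θ`. -/
noncomputable def onCircle (c : ℝ × ℝ) (r θ : ℝ) : ℝ × ℝ :=
  (c.1 + r * Real.cos θ, c.2 + r * Real.sin θ)

/-- At `v`, the plane embedding `φ` makes the two pairs of the crossing
structure alternate in the cyclic order around `v`: on every sufficiently small
circle around `v`, one can choose initial points of the four half-edge curves
appearing at angles in the alternating order pair 1, pair 2, pair 1, pair 2. -/
def PlaneEmb.AlternatingAt (φ : PlaneEmb G) (X : XStructure G) (v : G.V) : Prop :=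
  ∃ r0 > 0, ∀ r, 0 < r → r < r0 →
    ∃ a b c d : G.E × Bool,
      a ≠ b ∧ a ≠ c ∧ a ≠ d ∧ b ≠ c ∧ b ≠ d ∧ c ≠ d ∧
      G.hvtx a = v ∧ G.hvtx b = v ∧ G.hvtx c = v ∧ G.hvtx d = v ∧
      X.p a = X.p c ∧ X.p b = X.p d ∧ X.p a ≠ X.p b ∧
      ∃ θa θb θc θd : ℝ, θa < θb ∧ θb < θc ∧ θc < θd ∧ θd < θa + 2 * Real.pi ∧
      ∃ sa sb sc sd : unitInterval, sa ≠ 0 ∧ sb ≠ 0 ∧ sc ≠ 0 ∧ sd ≠ 0 ∧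
        φ.curve a sa = onCircle (φ.vmap v) r θa ∧
        φ.curve b sb = onCircle (φ.vmap v) r θb ∧
        φ.curve c sc = onCircle (φ.vmap v) r θc ∧
        φ.curve d sd = onCircle (φ.vmap v) r θd ∧
        (∀ s ≤ sa, dist (φ.curve a s) (φ.vmap v) ≤ r) ∧
        (∀ s ≤ sb, dist (φ.curve b s) (φ.vmap v) ≤ r) ∧
        (∀ s ≤ sc, dist (φ.curve c s) (φ.vmap v) ≤ r) ∧
        (∀ s ≤ sd, dist (φ.curve d s) (φ.vmap v) ≤ r)

variable (G)

/-- `G` with crossing structure `X` is X-planar: it admits a plane embedding in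
which the two pairs of half-edges alternate around every vertex. -/
def XPlanar (X : XStructure G) : Prop :=
  ∃ φ : PlaneEmb G, ∀ v : G.V, φ.AlternatingAt X v

variable {G}

end Multigraph


namespace Multigraph
namespace ClosedWalk

variable {G : Multigraph} {N : ℕ} [NeZero N]

private lemma cast_val' {n : ℕ} [NeZero n] (k : ZMod n) : ((k.val : ℕ) : ZMod n) = k :=
  ZMod.natCast_rightInverse k

def seg (T : G.ClosedWalk N) (i : ZMod N) (n : ℕ) (hn : 0 < n)
    (hclose : T.vtx (i + (n : ZMod N)) = T.vtx i) : G.ClosedWalk n where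
  dart k := T.dart (i + ((k.val : ℕ) : ZMod N))
  compat k := by
    haveI : NeZero n := ⟨hn.ne'⟩
    rcases lt_or_eq_of_le (Nat.succ_le_of_lt (ZMod.val_lt k)) with h | h
    · have h1 : (k + 1).val = k.val + 1 := by
        have e : ((k.val + 1 : ℕ) : ZMod n) = k + 1 := by
          rw [Nat.cast_add, Nat.cast_one, cast_val']
        rw [← e, ZMod.val_cast_of_lt h]
      have hc := T.compat (i + ((k.val : ℕ) : ZMod N))
      have e2 : i + ((k.val : ℕ) : ZMod N) + 1 = i + (((k + 1).val : ℕ) : ZMod N) := by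
        rw [h1, Nat.cast_add, Nat.cast_one]; ring
      rw [e2] at hc
      exact hc
    · have h0 : (k + 1 : ZMod n) = 0 := by
        have e : ((k.val + 1 : ℕ) : ZMod n) = k + 1 := by
          rw [Nat.cast_add, Nat.cast_one, cast_val']
        rw [← e, show k.val + 1 = n from h, ZMod.natCast_self]
      have hc := T.compat (i + ((k.val : ℕ) : ZMod N))
      have e2 : i + ((k.val : ℕ) : ZMod N) + 1 = i + (n : ZMod N) := by
        have h' : ((k.val + 1 : ℕ) : ZMod N) = (n : ZMod N) := by
          exact_mod_cast congrArg (Nat.cast : ℕ → ZMod N) h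
        rw [← h', Nat.cast_add, Nat.cast_one]; ring
      rw [e2] at hc
      rw [h0]
      simpa [vtx] using hclose.symm.trans hc

variable (T : G.ClosedWalk N) (i : ZMod N) {n : ℕ} (hn : 0 < n)
  (hc : T.vtx (i + (n : ZMod N)) = T.vtx i)

omit [NeZero N] in
lemma seg_dart (k : ZMod n) :
    (T.seg i n hn hc).dart k = T.dart (i + ((k.val : ℕ) : ZMod N)) := rfl

omit [NeZero N] in
lemma seg_vtx (k : ZMod n) :
    (T.seg i n hn hc).vtx k = T.vtx (i + ((k.val : ℕ) : ZMod N)) := rfl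

omit [NeZero N] in
lemma seg_vtx_zero : (T.seg i n hn hc).vtx 0 = T.vtx i := by
  haveI : NeZero n := ⟨hn.ne'⟩
  rw [seg_vtx]
  norm_num [ZMod.val_zero]

omit [NeZero N] in
lemma seg_leave (k : ZMod n) :
    (T.seg i n hn hc).leave k = T.leave (i + ((k.val : ℕ) : ZMod N)) := rfl

omit [NeZero N] in
lemma seg_leave_zero : (T.seg i n hn hc).leave 0 = T.leave i := by
  haveI : NeZero n := ⟨hn.ne'⟩
  rw [seg_leave]
  norm_num [ZMod.val_zero]

omit [NeZero N] in
lemma seg_enter_of_ne (k : ZMod n) (hk : k ≠ 0) :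
    (T.seg i n hn hc).enter k = T.enter (i + ((k.val : ℕ) : ZMod N)) := by
  haveI : NeZero n := ⟨hn.ne'⟩
  have hk1 : 1 ≤ k.val := Nat.one_le_iff_ne_zero.mpr (fun h => hk ((ZMod.val_eq_zero k).mp h))
  have hkn := ZMod.val_lt k
  have h1 : (k - 1).val = k.val - 1 := by
    have e : ((k.val - 1 : ℕ) : ZMod n) = k - 1 := by
      rw [Nat.cast_sub hk1, Nat.cast_one, cast_val']
    rw [← e, ZMod.val_cast_of_lt (by omega : k.val - 1 < n)]
  have e2 : i + (((k - 1).val : ℕ) : ZMod N) = i + ((k.val : ℕ) : ZMod N) - 1 := by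
    rw [h1, Nat.cast_sub hk1, Nat.cast_one]; ring
  simp only [enter, seg_dart, e2]

omit [NeZero N] in
lemma seg_enter_zero : (T.seg i n hn hc).enter 0 = T.enter (i + (n : ZMod N)) := by
  haveI : NeZero n := ⟨hn.ne'⟩
  have h1 : ((0 : ZMod n) - 1).val = n - 1 := by
    have e : ((n - 1 : ℕ) : ZMod n) = (0 : ZMod n) - 1 := by
      rw [Nat.cast_sub hn, Nat.cast_one, ZMod.natCast_self]
    rw [← e, ZMod.val_cast_of_lt (by omega : n - 1 < n)]
  have e2 : i + ((((0 : ZMod n) - 1).val : ℕ) : ZMod N) = i + (n : ZMod N) - 1 := by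
    rw [h1, Nat.cast_sub hn, Nat.cast_one]; ring
  simp only [enter, seg_dart, e2]

end ClosedWalk
end Multigraph

open Multigraph in
/-- If a turning Eulerian circuit `T` fails to be strongly turning
at a vertex `A` (its two entries into `A` use half-edges of different pairs),
then splitting `T` at the two visits of `A` yields two edge-disjoint closed
walks, whose edges together are all the edges of `T`, with unique crossing
vertex `A`. -/
theorem statement10 (G : Multigraph) (X : G.XStructure) (hreg : G.FourRegular)
    {N : ℕ} (hN : 0 < N) (T : G.ClosedWalk N)
    (hE : T.IsEulerian) (ht : Turning X T)
    (A : G.V) (i j : ZMod N) (hij : i ≠ j)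
    (hiA : T.vtx i = A) (hjA : T.vtx j = A)
    (hns : X.p (T.enter i) ≠ X.p (T.enter j)) :
    ∃ (n m : ℕ), 0 < n ∧ 0 < m ∧
      ∃ (w₁ : G.ClosedWalk n) (w₂ : G.ClosedWalk m),
        EdgeDisjoint w₁ w₂ ∧ w₁.edges ∪ w₂.edges = T.edges ∧
        (∀ v, CrossingVertex X w₁ w₂ v ↔ v = A) := by
  haveI : NeZero N := ⟨hN.ne'⟩
  have hji0 : j - i ≠ 0 := sub_ne_zero.mpr (Ne.symm hij)
  have hij0 : i - j ≠ 0 := sub_ne_zero.mpr hij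
  set n := (j - i).val with hn_def
  set m := (i - j).val with hm_def
  have hn : 0 < n := Nat.pos_of_ne_zero fun h => hji0 ((ZMod.val_eq_zero _).mp h)
  have hm : 0 < m := Nat.pos_of_ne_zero fun h => hij0 ((ZMod.val_eq_zero _).mp h)
  have hcastn : ((n : ℕ) : ZMod N) = j - i := ZMod.natCast_rightInverse _
  have hcastm : ((m : ℕ) : ZMod N) = i - j := ZMod.natCast_rightInverse _
  have hin : i + (n : ZMod N) = j := by rw [hcastn]; ring
  have hjm : j + (m : ZMod N) = i := by rw [hcastm]; ring
  have hnm : n + m = N := by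
    have h1 : i - j = -(j - i) := by ring
    have h2 : m = N - n := by
      rw [hm_def, h1, ZMod.neg_val, if_neg hji0]
    have h3 : n < N := ZMod.val_lt _
    omega
  have hclose1 : T.vtx (i + (n : ZMod N)) = T.vtx i := by rw [hin, hjA, hiA]
  have hclose2 : T.vtx (j + (m : ZMod N)) = T.vtx j := by rw [hjm, hiA, hjA]
  haveI : NeZero n := ⟨hn.ne'⟩
  haveI : NeZero m := ⟨hm.ne'⟩
  refine ⟨n, m, hn, hm, T.seg i n hn hclose1, T.seg j m hm hclose2, ?_, ?_, ?_⟩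
  · -- edge disjoint
    rintro e ⟨k, hk⟩ ⟨l, hl⟩
    rw [ClosedWalk.seg_dart] at hk hl
    obtain ⟨t, -, hu⟩ := hE e
    have h1 := hu _ hk
    have h2 := hu _ hl
    have h3 : i + ((k.val : ℕ) : ZMod N) = i + (n : ZMod N) + ((l.val : ℕ) : ZMod N) := by
      rw [hin]; exact h1.trans h2.symm
    have h4 : ((k.val : ℕ) : ZMod N) = ((n + l.val : ℕ) : ZMod N) := by
      rw [Nat.cast_add]
      rw [add_assoc] at h3
      exact add_left_cancel h3
    have hkn := ZMod.val_lt k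
    have hlm := ZMod.val_lt l
    have h5 : k.val = n + l.val := by
      have h6 := congrArg ZMod.val h4
      rwa [ZMod.val_cast_of_lt (by omega : k.val < N),
        ZMod.val_cast_of_lt (by omega : n + l.val < N)] at h6
    omega
  · -- union of edges
    ext e
    constructor
    · rintro (⟨k, hk⟩ | ⟨l, hl⟩)
      · exact ⟨_, hk⟩
      · exact ⟨_, hl⟩
    · rintro ⟨t, ht⟩
      set s := (t - i).val with hs_def
      have hsN : s < N := ZMod.val_lt _
      have hts : t = i + ((s : ℕ) : ZMod N) := by
        rw [hs_def, ZMod.natCast_rightInverse]; ring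
      by_cases hsn : s < n
      · left
        refine ⟨((s : ℕ) : ZMod n), ?_⟩
        rw [ClosedWalk.seg_dart, ZMod.val_cast_of_lt hsn, ← hts]
        exact ht
      · right
        refine ⟨((s - n : ℕ) : ZMod m), ?_⟩
        rw [ClosedWalk.seg_dart, ZMod.val_cast_of_lt (by omega : s - n < m)]
        have e2 : j + ((s - n : ℕ) : ZMod N) = t := by
          rw [← hin, Nat.cast_sub (le_of_not_gt hsn), hts]; ring
        rw [e2]
        exact ht
  · -- crossing vertex
    intro v
    constructor
    · rintro ⟨k, l, hk, hl, hpk, hpl, hne⟩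
      by_cases hk0 : k = 0
      · subst hk0
        rw [ClosedWalk.seg_vtx_zero] at hk
        exact hk.symm.trans hiA
      · exfalso
        rw [ClosedWalk.seg_enter_of_ne _ _ _ _ k hk0, ClosedWalk.seg_leave] at hpk
        exact ht _ hpk
    · rintro rfl
      have hb : X.p (T.enter j) = X.p (T.leave i) ∧ X.p (T.enter i) = X.p (T.leave j) ∧
          X.p (T.leave i) ≠ X.p (T.leave j) := by
        have b1 := ht i
        have b2 := ht j
        revert b1 b2 hns
        generalize X.p (T.enter i) = a
        generalize X.p (T.leave i) = b
        generalize X.p (T.enter j) = c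
        generalize X.p (T.leave j) = d
        revert a b c d
        decide
      refine ⟨0, 0, (ClosedWalk.seg_vtx_zero T i hn hclose1).trans hiA,
        (ClosedWalk.seg_vtx_zero T j hm hclose2).trans hjA, ?_, ?_, ?_⟩
      · rw [ClosedWalk.seg_enter_zero, ClosedWalk.seg_leave_zero, hin]
        exact hb.1
      · rw [ClosedWalk.seg_enter_zero, ClosedWalk.seg_leave_zero, hjm]
        exact hb.2.1
      · rw [ClosedWalk.seg_leave_zero, ClosedWalk.seg_leave_zero]
        exact hb.2.2
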